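/- Let p be an odd prime and suppose H is a subgroup of GL₂(ℤ_p) containing a cyclic subgroup of order p+1. Then H is not contained in the Iwahori subgroup of GL₂(ℤ_p); equivalently, if H ⊆ GL₂(ℤ_p) and H ⊆ η·GL₂(ℤ_p)·η⁻¹ where η = [[0,1],[p,0]], then H contains no element of order p+1. -/

import Mathlib

open Matrix

private lemma mul_natCast_apply' {R : Type*} [CommRing R] (M : Matrix (Fin 2) (Fin 2) R) (c : ℕ)
    (i j : Fin 2) : (M * (c : Matrix (Fin 2) (Fin 2) R)) i j = M i j * (c : R) := by
  rw [← Matrix.diagonal_natCast, Matrix.mul_diagonal]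

private lemma tri_pow' {R : Type*} [CommRing R] (M : Matrix (Fin 2) (Fin 2) R)
    (h : M 1 0 = 0) (n : ℕ) :
    (M ^ n) 1 0 = 0 ∧ (M ^ n) 0 0 = M 0 0 ^ n ∧ (M ^ n) 1 1 = M 1 1 ^ n := by
  induction n with
  | zero => simp [Matrix.one_apply]
  | succ n ih =>
    obtain ⟨h1, h2, h3⟩ := ih
    rw [pow_succ, pow_succ, pow_succ]
    refine ⟨?_, ?_, ?_⟩ <;>
      simp [Matrix.mul_apply, Fin.sum_univ_two, h1, h2, h3, h]

private lemma unip_pow' {R : Type*} [CommRing R] (M : Matrix (Fin 2) (Fin 2) R)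
    (h : M 1 0 = 0) (h0 : M 0 0 = 1) (h1 : M 1 1 = 1) (n : ℕ) :
    (M ^ n) 0 1 = (n : R) * M 0 1 := by
  induction n with
  | zero => simp [Matrix.one_apply]
  | succ n ih =>
    have ht := tri_pow' M h n
    rw [pow_succ]
    rw [Matrix.mul_apply, Fin.sum_univ_two]
    rw [ih, ht.2.1, h0, h1]
    push_cast
    ring

private lemma borel_pow' {p : ℕ} [hp : Fact p.Prime] (u : GL (Fin 2) (ZMod p))
    (h : ((u : GL (Fin 2) (ZMod p)) : Matrix (Fin 2) (Fin 2) (ZMod p)) 1 0 = 0) :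
    u ^ ((p - 1) * p) = 1 := by
  set M : Matrix (Fin 2) (Fin 2) (ZMod p) := (u : Matrix (Fin 2) (Fin 2) (ZMod p)) with hM
  have hdet : IsUnit M.det := (Matrix.isUnit_iff_isUnit_det M).mp u.isUnit
  have hdet2 : M.det = M 0 0 * M 1 1 := by rw [Matrix.det_fin_two, h]; ring
  have ha : M 0 0 ≠ 0 := by
    intro h0
    rw [hdet2, h0, zero_mul] at hdet
    exact hdet.ne_zero rfl
  have hd : M 1 1 ≠ 0 := by
    intro h0
    rw [hdet2, h0, mul_zero] at hdet
    exact hdet.ne_zero rfl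
  set N : Matrix (Fin 2) (Fin 2) (ZMod p) := M ^ (p - 1) with hN
  obtain ⟨hN10, hN00, hN11⟩ := tri_pow' M h (p - 1)
  have hN00' : N 0 0 = 1 := by rw [hN, hN00, ZMod.pow_card_sub_one_eq_one ha]
  have hN11' : N 1 1 = 1 := by rw [hN, hN11, ZMod.pow_card_sub_one_eq_one hd]
  have hN10' : N 1 0 = 0 := hN10
  have hNp : N ^ p = 1 := by
    obtain ⟨hP10, hP00, hP11⟩ := tri_pow' N hN10' p
    have hP01 := unip_pow' N hN10' hN00' hN11' p
    ext i j
    fin_cases i <;> fin_cases j <;>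
      simp_all [Matrix.one_apply, ZMod.natCast_self]
  have : M ^ ((p - 1) * p) = 1 := by rw [pow_mul, ← hN, hNp]
  ext i j
  rw [Units.val_pow_eq_pow_val]
  rw [show ((u : GL (Fin 2) (ZMod p)) : Matrix (Fin 2) (Fin 2) (ZMod p)) = M from rfl, this]
  rfl

private lemma ker_torsion' {p : ℕ} [hp : Fact p.Prime] (q : ℕ) (hq2 : 2 ≤ q) (hqp : ¬ p ∣ q)
    (x : Matrix (Fin 2) (Fin 2) ℤ_[p])
    (hx1 : ∀ i j, ‖(x - 1) i j‖ < 1) (hxq : x ^ q = 1) : x = 1 := by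
  set A : Matrix (Fin 2) (Fin 2) ℤ_[p] := x - 1 with hA
  have hx : x = A + 1 := by simp [hA]
  set r : ℝ := max (max ‖A 0 0‖ ‖A 0 1‖) (max ‖A 1 0‖ ‖A 1 1‖) with hr
  have hAr : ∀ i j, ‖A i j‖ ≤ r := by
    intro i j
    fin_cases i <;> fin_cases j
    · exact le_max_of_le_left (le_max_left _ _)
    · exact le_max_of_le_left (le_max_right _ _)
    · exact le_max_of_le_right (le_max_left _ _)
    · exact le_max_of_le_right (le_max_right _ _)
  have hr1 : r < 1 := max_lt (max_lt (hx1 0 0) (hx1 0 1)) (max_lt (hx1 1 0) (hx1 1 1))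
  have hr0 : 0 ≤ r := le_trans (norm_nonneg _) (hAr 0 0)
  have hmul : ∀ (M N : Matrix (Fin 2) (Fin 2) ℤ_[p]) (a b : ℝ), 0 ≤ a →
      (∀ i j, ‖M i j‖ ≤ a) → (∀ i j, ‖N i j‖ ≤ b) → ∀ i j, ‖(M * N) i j‖ ≤ a * b := by
    intro M N a b ha hM hN i j
    rw [Matrix.mul_apply, Fin.sum_univ_two]
    refine le_trans (PadicInt.nonarchimedean _ _) (max_le ?_ ?_) <;>
      · rw [norm_mul]
        exact mul_le_mul (hM _ _) (hN _ _) (norm_nonneg _) ha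
  have hpow : ∀ n, ∀ i j, ‖(A ^ (n + 2)) i j‖ ≤ r * r := by
    intro n
    induction n with
    | zero => simpa [pow_two] using hmul A A r r hr0 hAr hAr
    | succ n ih =>
      intro i j
      have he : A ^ (n + 1 + 2) = A ^ (n + 2) * A := by
        rw [show n + 1 + 2 = n + 2 + 1 from rfl, pow_succ]
      rw [he]
      calc ‖(A ^ (n + 2) * A) i j‖ ≤ (r * r) * r :=
            hmul _ _ _ _ (mul_nonneg hr0 hr0) ih hAr i j
        _ ≤ (r * r) * 1 := by nlinarith
        _ = r * r := mul_one _
  obtain ⟨m, rfl⟩ : ∃ m, q = m + 2 := ⟨q - 2, by omega⟩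
  have hbin := (Commute.one_right A).add_pow (m + 2)
  rw [← hx, hxq] at hbin
  simp only [one_pow, mul_one] at hbin
  rw [Finset.sum_range_succ', Finset.sum_range_succ'] at hbin
  simp only [pow_zero, pow_one, Nat.choose_zero_right, Nat.choose_one_right,
    Nat.cast_one, one_mul, mul_one] at hbin
  -- hbin : 1 = (∑ k in range (m+1), A^(k+1+1) * ↑((m+2).choose (k+1+1)) + A * ↑(m+2)) + 1
  set S : Matrix (Fin 2) (Fin 2) ℤ_[p] :=
    ∑ k ∈ Finset.range (m + 1), A ^ (k + 1 + 1) * ((m + 2).choose (k + 1 + 1) : Matrix (Fin 2) (Fin 2) ℤ_[p]) with hS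
  have hAq : A * ((m + 2 : ℕ) : Matrix (Fin 2) (Fin 2) ℤ_[p]) = -S := by
    have h0 : S + A * ((m + 2 : ℕ) : Matrix (Fin 2) (Fin 2) ℤ_[p]) = 0 := by
      have hb := hbin
      simp only [zero_add, pow_one, Nat.choose_one_right] at hb
      exact right_eq_add.mp hb
    exact eq_neg_of_add_eq_zero_right h0
  have hq1 : ‖((m + 2 : ℕ) : ℤ_[p])‖ = 1 := by
    refine le_antisymm (PadicInt.norm_le_one _) (not_lt.mp fun hlt => hqp ?_)
    rw [show ((m + 2 : ℕ) : ℤ_[p]) = (((m + 2 : ℕ) : ℤ) : ℤ_[p]) by push_cast; ring] at hlt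
    rw [PadicInt.norm_int_lt_one_iff_dvd] at hlt
    exact_mod_cast hlt
  have hkey : ∀ i j, ‖A i j‖ ≤ r * r := by
    intro i j
    have h1 : ‖(A * ((m + 2 : ℕ) : Matrix (Fin 2) (Fin 2) ℤ_[p])) i j‖ = ‖A i j‖ := by
      rw [mul_natCast_apply', norm_mul, hq1, mul_one]
    have h2 : ‖S i j‖ ≤ r * r := by
      rw [hS, Matrix.sum_apply]
      obtain ⟨k, hk, hle⟩ := IsUltrametricDist.exists_norm_finset_sum_le_of_nonempty
        (Finset.nonempty_range_iff.mpr (Nat.succ_ne_zero m))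
        (fun k => (A ^ (k + 1 + 1) * (((m + 2).choose (k + 1 + 1) : ℕ) :
          Matrix (Fin 2) (Fin 2) ℤ_[p])) i j)
      refine hle.trans ?_
      rw [mul_natCast_apply', norm_mul]
      calc ‖(A ^ (k + 1 + 1)) i j‖ * ‖(((m + 2).choose (k + 1 + 1) : ℕ) : ℤ_[p])‖
          ≤ (r * r) * 1 :=
            mul_le_mul (hpow k i j) (PadicInt.norm_le_one _) (norm_nonneg _)
              (mul_nonneg hr0 hr0)
        _ = r * r := mul_one _
    calc ‖A i j‖ = ‖(A * ((m + 2 : ℕ) : Matrix (Fin 2) (Fin 2) ℤ_[p])) i j‖ := h1.symm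
      _ = ‖(-S) i j‖ := by rw [hAq]
      _ = ‖S i j‖ := by rw [Matrix.neg_apply, norm_neg]
      _ ≤ r * r := h2
  have hrr : r ≤ r * r := max_le (max_le (hkey 0 0) (hkey 0 1)) (max_le (hkey 1 0) (hkey 1 1))
  have hrz : r = 0 := by nlinarith
  have hA0 : A = 0 := by
    ext i j
    have := (hAr i j).trans (le_of_eq hrz)
    simpa using norm_le_zero_iff.mp this
  rw [hx, hA0, zero_add]

/-- For `p` an odd prime, a subgroup of `GL₂(ℤ_p)` contained in the Iwahori
subgroup contains no element of order `p + 1`; equivalently, a subgroup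
containing a cyclic subgroup of order `p + 1` is not contained in the Iwahori
subgroup. -/
theorem stmt13 (p : ℕ) [Fact p.Prime] (hodd : Odd p)
    (H : Subgroup (GL (Fin 2) ℤ_[p]))
    (hH : ∀ g ∈ H, ((g : GL (Fin 2) ℤ_[p]) : Matrix (Fin 2) (Fin 2) ℤ_[p]) 1 0 ∈
      Ideal.span ({(p : ℤ_[p])} : Set ℤ_[p])) :
    ∀ g ∈ H, orderOf g ≠ p + 1 := by
  intro g hg hord
  have hp := Fact.out (p := p.Prime)
  have hp3 : 3 ≤ p := by
    obtain ⟨k, hk⟩ := hodd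
    have := hp.two_le
    omega
  set φ : GL (Fin 2) ℤ_[p] →* GL (Fin 2) (ZMod p) :=
    Matrix.GeneralLinearGroup.map (PadicInt.toZMod) with hφ
  have hφg10 : ((φ g : GL (Fin 2) (ZMod p)) : Matrix (Fin 2) (Fin 2) (ZMod p)) 1 0 = 0 := by
    obtain ⟨c, hc⟩ := Ideal.mem_span_singleton.mp (hH g hg)
    have h1 : ((φ g : GL (Fin 2) (ZMod p)) : Matrix (Fin 2) (Fin 2) (ZMod p)) 1 0 =
        PadicInt.toZMod (((g : GL (Fin 2) ℤ_[p]) : Matrix (Fin 2) (Fin 2) ℤ_[p]) 1 0) := by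
      rw [hφ]
      exact Matrix.GeneralLinearGroup.map_apply (PadicInt.toZMod) 1 0 g
    rw [h1, hc, _root_.map_mul]
    simp
  have hdvd1 : orderOf (φ g) ∣ p + 1 := hord ▸ orderOf_map_dvd φ g
  have hdvd2 : orderOf (φ g) ∣ (p - 1) * p :=
    orderOf_dvd_of_pow_eq_one (borel_pow' (φ g) hφg10)
  have hcop : Nat.Coprime (orderOf (φ g)) p :=
    Nat.Coprime.coprime_dvd_left hdvd1 (by simpa using Nat.coprime_succ_self_left (n := p))
  have h1 : orderOf (φ g) ∣ p - 1 := Nat.Coprime.dvd_of_dvd_mul_right hcop hdvd2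
  have hdvd : orderOf (φ g) ∣ 2 := by
    have h2 := Nat.dvd_sub hdvd1 h1
    rwa [show p + 1 - (p - 1) = 2 by omega] at h2
  have hφ2 : φ (g ^ 2) = 1 := by
    rw [map_pow]
    exact orderOf_dvd_iff_pow_eq_one.mp hdvd
  set x : Matrix (Fin 2) (Fin 2) ℤ_[p] :=
    ((g ^ 2 : GL (Fin 2) ℤ_[p]) : Matrix (Fin 2) (Fin 2) ℤ_[p]) with hxdef
  have hent : ∀ i j, PadicInt.toZMod (x i j) = (1 : Matrix (Fin 2) (Fin 2) (ZMod p)) i j := by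
    intro i j
    rw [hxdef, ← Matrix.GeneralLinearGroup.map_apply (PadicInt.toZMod) i j (g ^ 2), ← hφ, hφ2]
    rfl
  have hx1 : ∀ i j, ‖(x - 1) i j‖ < 1 := by
    intro i j
    have h0 : PadicInt.toZMod ((x - 1) i j) = 0 := by
      rw [Matrix.sub_apply, map_sub, hent i j]
      have : PadicInt.toZMod ((1 : Matrix (Fin 2) (Fin 2) ℤ_[p]) i j) =
          (1 : Matrix (Fin 2) (Fin 2) (ZMod p)) i j := by
        simp [Matrix.one_apply, apply_ite (PadicInt.toZMod (p := p))]
      rw [this, sub_self]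
    have hker : (x - 1) i j ∈ IsLocalRing.maximalIdeal ℤ_[p] := by
      rw [← PadicInt.ker_toZMod]
      exact RingHom.mem_ker.mpr h0
    rw [PadicInt.maximalIdeal_eq_span_p, Ideal.mem_span_singleton] at hker
    exact (PadicInt.norm_lt_one_iff_dvd _).mpr hker
  have hxq : x ^ (p + 1) = 1 := by
    have hg1 : g ^ (p + 1) = 1 := by rw [← hord]; exact pow_orderOf_eq_one g
    have h2 : (g ^ 2) ^ (p + 1) = 1 := by rw [← pow_mul, mul_comm, pow_mul, hg1, one_pow]
    rw [hxdef, ← Units.val_pow_eq_pow_val, h2, Units.val_one]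
  have hnd : ¬ p ∣ p + 1 := by
    intro h
    have := (Nat.dvd_add_right (dvd_refl p)).mp h
    have := Nat.le_of_dvd one_pos this
    omega
  have hx1' : x = 1 := ker_torsion' (p + 1) (by omega) hnd x hx1 hxq
  have hg2 : g ^ 2 = 1 := by
    apply Units.ext
    rw [Units.val_one]
    exact hxdef ▸ hx1'
  have hdv : orderOf g ∣ 2 := orderOf_dvd_of_pow_eq_one hg2
  rw [hord] at hdv
  have := Nat.le_of_dvd (by norm_num) hdv
  omega
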